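/- Let 0 ≤ μ < L < ∞, 0 < α ≤ β, D ∈ ℝ, N ≥ 1, and stepsizes h₀, …, h_{N−1} ∈ [0,1]. Let x₀, x_⋆, z₀, …, z_{N−1} ∈ E with x_{i+1} = (1 − h_i)·x_i + h_i·z_i for 0 ≤ i ≤ N−1, and let g_k ∈ E, f_k ∈ ℝ for k ∈ {0, …, N, ⋆} with g_⋆ ≠ 0. Then the following are equivalent. (A) There exist f ∈ F_{μ,L} and a nonempty closed convex set C ⊆ E that is α-strongly convex, β-smooth, with diam(C) ≤ D, such that: g_k is a subgradient of f at x_k and f(x_k) = f_k for all k ∈ {0, …, N, ⋆}; x₀ ∈ C; for each 0 ≤ i ≤ N−1, z_i ∈ C and ⟪g_i, z_i⟫ ≤ ⟪g_i, y⟫ for all y ∈ C; and x_⋆ ∈ C with f(x_⋆) ≤ f(y) for all y ∈ C. (B) The interpolation data with boundary pairs (z_i, −g_i) for 0 ≤ i ≤ N−1 together with (x_⋆, −g_⋆), and interior points (x_k, 0) for 0 ≤ k ≤ N, is interpolated by some nonempty closed convex α-strongly convex β-smooth set of diameter at most D; and the family (x_k, g_k, f_k)_{k∈{0,…,N,⋆}}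 is F_{μ,L}-interpolable. -/
import Mathlib


open Metric Set
open scoped RealInnerProductSpace Pointwise

noncomputable section

variable {F : Type*} [NormedAddCommGroup F] [InnerProductSpace ℝ F]

/-- The normal cone of a set `C` at a point `z`. -/
def normalCone (C : Set F) (z : F) : Set F :=
  {v | ∀ x ∈ C, ⟪v, x - z⟫ ≤ 0}

/-- A set `C` is `β`-smooth if at every boundary point `z`, every unit normal vector `n`
gives a closed ball of radius `1/β` centered at `z - (1/β) n` contained in `C`. -/
def IsSmoothSet (β : ℝ) (C : Set F) : Prop :=
  ∀ z ∈ frontier C, ∀ n ∈ normalCone C z, ‖n‖ = 1 →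
    closedBall (z - (1 / β) • n) (1 / β) ⊆ C

/-- A set `C` is `α`-strongly convex if at every boundary point `z`, every unit normal
vector `n` gives a closed ball of radius `1/α` centered at `z - (1/α) n` containing `C`. -/
def IsStronglyConvexSet (α : ℝ) (C : Set F) : Prop :=
  ∀ z ∈ frontier C, ∀ n ∈ normalCone C z, ‖n‖ = 1 →
    C ⊆ closedBall (z - (1 / α) • n) (1 / α)

/-- `diam C ≤ D`, expressed pointwise. -/
def DiamLE (C : Set F) (D : ℝ) : Prop :=
  ∀ x ∈ C, ∀ y ∈ C, ‖x - y‖ ≤ D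

/-- The `δ`-interior of a set: points whose closed `δ`-ball lies inside the set. -/
def deltaInterior (δ : ℝ) (C : Set F) : Set F :=
  {x | closedBall x δ ⊆ C}

/-- The set `C` interpolates the data: `z i ∈ C` with normal vector `v i`, and
`x k` lies in the `δ k`-interior of `C`. -/
def InterpolatedBy {ι κ : Type*} (C : Set F) (z v : ι → F) (x : κ → F) (δ : κ → ℝ) : Prop :=
  (∀ i, z i ∈ C ∧ v i ∈ normalCone C (z i)) ∧ ∀ k, x k ∈ deltaInterior (δ k) C

/-- The interpolation conditions `Interp(α, β, D; λ)`, with `n i = v i / ‖v i‖`,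
`r = 1/α - 1/β` and `s k = max 0 (δ k - 1/β)`. -/
def InterpCond {ι κ : Type*} (α β D lam : ℝ) (z v : ι → F) (x : κ → F) (δ : κ → ℝ) : Prop :=
  ∃ w : κ → F,
    (∀ i j, ‖z i - (1 / α) • (‖v i‖⁻¹ • v i) - (z j - (1 / β) • (‖v j‖⁻¹ • v j))‖ ≤
      1 / α - 1 / β) ∧
    (∀ i k, ‖z i - (1 / α) • (‖v i‖⁻¹ • v i) - w k‖ ≤
      (1 / α - 1 / β) - max 0 (δ k - 1 / β)) ∧
    (∀ k, ‖x k - w k‖ ≤ 1 / β - δ k + max 0 (δ k - 1 / β)) ∧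
    (∀ i j, ‖z i - (1 / β) • (‖v i‖⁻¹ • v i) - (z j - (1 / β) • (‖v j‖⁻¹ • v j))‖ ≤
      lam * (D - 2 / β)) ∧
    (∀ i k, ‖z i - (1 / β) • (‖v i‖⁻¹ • v i) - w k‖ ≤
      lam * (D - 2 / β) - max 0 (δ k - 1 / β)) ∧
    (∀ k l, ‖w k - w l‖ ≤ lam * (D - 2 / β) - max 0 (δ k - 1 / β) - max 0 (δ l - 1 / β))

/-- `g` is a subgradient of `f` at `x`. -/
def IsSubgradientOf (f : F → ℝ) (g x : F) : Prop :=
  ∀ u, f x + ⟪g, u - x⟫ ≤ f u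

/-- The class `F_{μ,L}` of `μ`-strongly convex, `L`-smooth convex functions. -/
def MemFclass (μ L : ℝ) (f : F → ℝ) : Prop :=
  ConvexOn ℝ Set.univ f ∧
  ∀ x y g, IsSubgradientOf f g x →
    f y ≤ f x + ⟪g, y - x⟫ + L / 2 * ‖y - x‖ ^ 2 ∧
    f x + ⟪g, y - x⟫ + μ / 2 * ‖y - x‖ ^ 2 ≤ f y

/-- Frank–Wolfe interpolation (exterior optimum case `g⋆ ≠ 0`): existence of an objective
`f ∈ F_{μ,L}` and a structured constraint set `C` consistent with the Frank–Wolfe data is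
equivalent to separate set interpolability of the data `S_{g⋆ ≠ 0}` and function
interpolability of `(x_k, g_k, f_k)`. -/
theorem frankWolfe_interpolation_exterior {d : ℕ} (hd : 1 ≤ d) (μ L α β D : ℝ)
    (hμ : 0 ≤ μ) (hμL : μ < L) (hα : 0 < α) (hαβ : α ≤ β)
    (N : ℕ) (hN : 1 ≤ N) (h : ℕ → ℝ) (hh : ∀ i < N, h i ∈ Set.Icc (0 : ℝ) 1)
    (x z g : ℕ → EuclideanSpace ℝ (Fin d)) (xstar gstar : EuclideanSpace ℝ (Fin d))
    (fv : ℕ → ℝ) (fstar : ℝ)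
    (hiter : ∀ i < N, x (i + 1) = (1 - h i) • x i + h i • z i)
    (hgstar : gstar ≠ 0) :
    (∃ f : EuclideanSpace ℝ (Fin d) → ℝ, ∃ C : Set (EuclideanSpace ℝ (Fin d)),
        MemFclass μ L f ∧ C.Nonempty ∧ IsClosed C ∧ Convex ℝ C ∧
        IsStronglyConvexSet α C ∧ IsSmoothSet β C ∧ DiamLE C D ∧
        (∀ k ≤ N, IsSubgradientOf f (g k) (x k) ∧ f (x k) = fv k) ∧
        IsSubgradientOf f gstar xstar ∧ f xstar = fstar ∧
        x 0 ∈ C ∧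
        (∀ i < N, z i ∈ C ∧ ∀ y ∈ C, ⟪g i, z i⟫ ≤ ⟪g i, y⟫) ∧
        xstar ∈ C ∧ (∀ y ∈ C, f xstar ≤ f y)) ↔
      ((∃ C : Set (EuclideanSpace ℝ (Fin d)), C.Nonempty ∧ IsClosed C ∧ Convex ℝ C ∧
          IsStronglyConvexSet α C ∧ IsSmoothSet β C ∧ DiamLE C D ∧
          (∀ i < N, z i ∈ C ∧ -g i ∈ normalCone C (z i)) ∧
          (xstar ∈ C ∧ -gstar ∈ normalCone C xstar) ∧
          (∀ k ≤ N, x k ∈ deltaInterior 0 C)) ∧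
       (∃ f : EuclideanSpace ℝ (Fin d) → ℝ, MemFclass μ L f ∧
          (∀ k ≤ N, f (x k) = fv k ∧ IsSubgradientOf f (g k) (x k)) ∧
          f xstar = fstar ∧ IsSubgradientOf f gstar xstar)) := by
  constructor
  · rintro ⟨f, C, hf, hne, hcl, hcv, hsc, hsm, hdm, hsub, hgs, hfs, hx0, hz, hxs, hmin⟩
    have hxC : ∀ k, k ≤ N → x k ∈ C := by
      intro k
      induction k with
      | zero => intro _; exact hx0
      | succ i ih =>
        intro hk
        have hi : i < N := hk
        have hhi := hh i hi
        rw [hiter i hi]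
        exact hcv (ih hi.le) (hz i hi).1 (by linarith [hhi.2]) hhi.1 (by ring)
    constructor
    · refine ⟨C, hne, hcl, hcv, hsc, hsm, hdm, ?_, ⟨hxs, ?_⟩, ?_⟩
      · intro i hi
        refine ⟨(hz i hi).1, ?_⟩
        intro y hy
        have := (hz i hi).2 y hy
        simp only [inner_neg_left, inner_sub_right]
        linarith
      · -- -gstar ∈ normalCone C xstar
        intro y hy
        simp only [inner_neg_left, inner_sub_right, neg_sub]
        rw [sub_nonpos]
        by_contra hlt
        push_neg at hlt
        set a : ℝ := ⟪gstar, y⟫ - ⟪gstar, xstar⟫ with ha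
        have hav : a = ⟪gstar, y - xstar⟫ := by rw [inner_sub_right]
        have haneg : a < 0 := by linarith
        have hvne : y - xstar ≠ 0 := by
          intro h0
          rw [hav, h0, inner_zero_right] at haneg
          exact lt_irrefl _ haneg
        set c : ℝ := ‖y - xstar‖ ^ 2 with hc
        have hcpos : 0 < c := pow_pos (norm_pos_iff.mpr hvne) 2
        have hL : 0 < L := lt_of_le_of_lt hμ hμL
        set t : ℝ := min 1 (-a / (L * c)) with ht
        have htpos : 0 < t := by
          apply lt_min one_pos
          apply div_pos (by linarith) (by positivity)
        have ht1 : t ≤ 1 := min_le_left _ _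
        have htlc : t * (L * c) ≤ -a := by
          rw [← le_div_iff₀ (by positivity)]
          exact min_le_right _ _
        set y' := xstar + t • (y - xstar) with hy'
        have hy'C : y' ∈ C := by
          have : y' = (1 - t) • xstar + t • y := by
            rw [hy']; module
          rw [this]
          exact hcv hxs hy (by linarith) htpos.le (by ring)
        have hkey := (hf.2 xstar y' gstar hgs).1
        have hy'x : y' - xstar = t • (y - xstar) := by rw [hy']; abel
        have hinner : ⟪gstar, y' - xstar⟫ = t * a := by
          rw [hy'x, real_inner_smul_right, hav]
        have hnorm : ‖y' - xstar‖ ^ 2 = t ^ 2 * c := by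
          rw [hy'x, norm_smul, mul_pow, hc, Real.norm_eq_abs, sq_abs]
        have hge := hmin y' hy'C
        rw [hinner, hnorm] at hkey
        have hineq : 0 ≤ t * a + L / 2 * (t ^ 2 * c) := by linarith
        nlinarith [htpos, haneg, htlc]
      · intro k hk
        intro p hp
        have : p = x k := by
          have := mem_closedBall.mp hp
          have : dist p (x k) = 0 := le_antisymm this dist_nonneg
          exact dist_eq_zero.mp this
        rw [this]; exact hxC k hk
    · exact ⟨f, hf, fun k hk => ⟨(hsub k hk).2, (hsub k hk).1⟩, hfs, hgs⟩
  · rintro ⟨⟨C, hne, hcl, hcv, hsc, hsm, hdm, hz, ⟨hxsC, hns⟩, hint⟩,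
      ⟨f, hf, hsub, hfs, hgs⟩⟩
    refine ⟨f, C, hf, hne, hcl, hcv, hsc, hsm, hdm,
      fun k hk => ⟨(hsub k hk).2, (hsub k hk).1⟩, hgs, hfs, ?_, ?_, hxsC, ?_⟩
    · have := hint 0 (Nat.zero_le N)
      exact this (mem_closedBall_self le_rfl)
    · intro i hi
      refine ⟨(hz i hi).1, ?_⟩
      intro y hy
      have := (hz i hi).2 y hy
      simp only [inner_neg_left, inner_sub_right] at this
      linarith
    · intro y hy
      have h1 := hgs y
      have h2 := hns y hy
      simp only [inner_neg_left, inner_sub_right] at h2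
      rw [inner_sub_right] at h1
      linarith
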